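/- Let N ≥ 1 and equip the space of N×N complex matrices with the normalized Hilbert–Schmidt inner product ⟨A,B⟩ = tr(A†B)/N. Let (P_i) be an orthonormal basis of this matrix space with respect to this inner product. Let Λ and Φ be linear maps on N×N complex matrices with Λ(P_i) = λ_i P_i and Φ(P_i) = (λ_i + ε_i) P_i for complex scalars λ_i, ε_i. Let ρ be a positive semidefinite N×N matrix with tr(ρ) = 1, and let Π be an N×N Hermitian matrix with 0 ≤ Π ≤ I. Then |tr(Π Φ(ρ)) − tr(Π Λ(ρ))| ≤ √N · max_i |ε_i|. -/

import Mathlib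

open scoped BigOperators Matrix ComplexOrder

private theorem aux_trace_nonneg {n : Type*} [Fintype n] [DecidableEq n]
    {A : Matrix n n ℂ} (hA : A.PosSemidef) : 0 ≤ A.trace := by
  apply Finset.sum_nonneg
  intro i _
  exact hA.diag_nonneg

private theorem aux_trace_sq_eig {n : Type*} [Fintype n] [DecidableEq n]
    {A : Matrix n n ℂ} (hA : A.IsHermitian) :
    (A * A).trace = ∑ i, ((hA.eigenvalues i : ℂ))^2 := by
  conv_lhs => rw [hA.spectral_theorem, Unitary.conjStarAlgAut_apply]
  set U := (hA.eigenvectorUnitary : Matrix n n ℂ)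
  set D := Matrix.diagonal (RCLike.ofReal ∘ hA.eigenvalues : n → ℂ)
  have hU : star U * U = 1 := Unitary.coe_star_mul_self hA.eigenvectorUnitary
  have h2 : (U * D * star U) * (U * D * star U) = U * (D * D) * star U := by
    have h3 : star U * (U * D * star U) = D * star U := by
      rw [← Matrix.mul_assoc, ← Matrix.mul_assoc, hU, Matrix.one_mul]
    rw [Matrix.mul_assoc (U * D), h3]
    simp only [Matrix.mul_assoc]
  rw [h2, Matrix.trace_mul_cycle, ← Matrix.mul_assoc, hU, Matrix.one_mul,
    Matrix.diagonal_mul_diagonal, Matrix.trace_diagonal]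
  simp [sq]

private theorem aux_trace_eig {n : Type*} [Fintype n] [DecidableEq n]
    {A : Matrix n n ℂ} (hA : A.IsHermitian) :
    A.trace = ∑ i, ((hA.eigenvalues i : ℂ)) := by
  conv_lhs => rw [hA.spectral_theorem, Unitary.conjStarAlgAut_apply]
  rw [Matrix.trace_mul_cycle,
    Unitary.coe_star_mul_self hA.eigenvectorUnitary, Matrix.one_mul, Matrix.trace_diagonal]
  simp

theorem stmt3 {N : ℕ} (hN : 1 ≤ N) {ι : Type*} [Fintype ι] [DecidableEq ι]
    (P : Module.Basis ι ℂ (Matrix (Fin N) (Fin N) ℂ))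
    (hortho : ∀ i j, (Matrix.trace ((P i)ᴴ * P j)) / (N : ℂ) = if i = j then 1 else 0)
    (Λ Φ : Matrix (Fin N) (Fin N) ℂ →ₗ[ℂ] Matrix (Fin N) (Fin N) ℂ)
    (lam eps : ι → ℂ)
    (hΛ : ∀ i, Λ (P i) = lam i • P i)
    (hΦ : ∀ i, Φ (P i) = (lam i + eps i) • P i)
    (ρ : Matrix (Fin N) (Fin N) ℂ) (hρ : ρ.PosSemidef) (hρtr : ρ.trace = 1)
    (Pm : Matrix (Fin N) (Fin N) ℂ) (hPm : Pm.PosSemidef) (hPm1 : (1 - Pm).PosSemidef) :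
    ‖(Pm * Φ ρ).trace - (Pm * Λ ρ).trace‖ ≤
      Real.sqrt N * ⨆ i, ‖eps i‖ := by
  have hN0 : (0:ℝ) < N := by exact_mod_cast hN
  have hNc : (N:ℂ) ≠ 0 := by exact_mod_cast hN0.ne'
  -- orthonormality in unnormalized form
  have horthoN : ∀ i j, ((P i)ᴴ * P j).trace = if i = j then (N:ℂ) else 0 := by
    intro i j
    have h := hortho i j
    rw [div_eq_iff hNc] at h
    rw [h]
    split <;> simp
  -- key expansion of Hilbert-Schmidt inner products
  have key : ∀ A B : Matrix (Fin N) (Fin N) ℂ,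
      (Aᴴ * B).trace = (N:ℂ) * ∑ i, (starRingEnd ℂ) (P.repr A i) * P.repr B i := by
    intro A B
    conv_lhs => rw [← P.sum_repr A, ← P.sum_repr B]
    rw [Matrix.conjTranspose_sum, Finset.sum_mul_sum, Matrix.trace_sum]
    simp only [Matrix.conjTranspose_smul, Matrix.trace_sum, Matrix.smul_mul, Matrix.mul_smul,
      Matrix.trace_smul, smul_smul, smul_eq_mul, horthoN, mul_ite, mul_zero, Finset.sum_ite_eq,
      Finset.mem_univ, if_true, Finset.mul_sum]
    refine Finset.sum_congr rfl fun i _ => ?_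
    simp [Complex.star_def]
    ring
  set c : ι → ℂ := fun i => P.repr ρ i
  set pm : ι → ℂ := fun i => P.repr Pm i
  -- the difference of the channels on ρ
  have hD : Φ ρ - Λ ρ = ∑ i, (eps i * c i) • P i := by
    conv_lhs => rw [← P.sum_repr ρ, map_sum, map_sum]
    rw [← Finset.sum_sub_distrib]
    refine Finset.sum_congr rfl fun i _ => ?_
    rw [map_smul, map_smul, hΦ, hΛ, smul_smul, smul_smul, ← sub_smul]
    congr 1
    ring
  -- the quantity as an explicit sum
  have hT : (Pm * Φ ρ).trace - (Pm * Λ ρ).trace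
      = ∑ i, (eps i * c i) * ((N:ℂ) * (starRingEnd ℂ) (pm i)) := by
    rw [← Matrix.trace_sub, ← Matrix.mul_sub, hD, Matrix.mul_sum, Matrix.trace_sum]
    refine Finset.sum_congr rfl fun i _ => ?_
    rw [Matrix.mul_smul, Matrix.trace_smul, smul_eq_mul]
    congr 1
    have := key Pm (P i)
    rw [hPm.1.eq] at this
    rw [this]
    simp [Module.Basis.repr_self, Finsupp.single_apply, Finset.sum_ite_eq, pm]
  -- sums of squares of coordinates
  have hS1 : (N:ℝ) * ∑ i, (‖c i‖)^2 = ∑ i, (hρ.1.eigenvalues i)^2 := by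
    have h1 : ((N:ℝ) * ∑ i, (‖c i‖)^2 : ℂ) = ((∑ i, (hρ.1.eigenvalues i)^2 : ℝ) : ℂ) := by
      push_cast
      have h2 := key ρ ρ
      rw [hρ.1.eq] at h2
      rw [← aux_trace_sq_eig hρ.1, h2]
      congr 1
      refine Finset.sum_congr rfl fun i _ => ?_
      rw [← Complex.normSq_eq_conj_mul_self]
      norm_cast
      exact Complex.sq_norm _
    exact_mod_cast h1
  have hS2 : (N:ℝ) * ∑ i, (‖pm i‖)^2 = ((Pm * Pm).trace).re := by
    have h2 := key Pm Pm
    rw [hPm.1.eq] at h2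
    have := congrArg Complex.re h2
    rw [this]
    simp only [← Complex.normSq_eq_conj_mul_self]
    rw [show (∑ i, ((Complex.normSq (pm i) : ℂ))) = ((∑ i, Complex.normSq (pm i) : ℝ) : ℂ) by push_cast; rfl]
    rw [show ((N:ℂ) * ((∑ i, Complex.normSq (pm i) : ℝ) : ℂ)) = (((N:ℝ) * ∑ i, Complex.normSq (pm i) : ℝ) : ℂ) by push_cast; ring]
    rw [Complex.ofReal_re]
    congr 1
    refine Finset.sum_congr rfl fun i _ => ?_
    rw [Complex.sq_norm]
  -- bound on ρ coordinates
  have hμsum : ∑ i, hρ.1.eigenvalues i = 1 := by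
    have := aux_trace_eig hρ.1
    rw [hρtr] at this
    have h3 : ((∑ i, hρ.1.eigenvalues i : ℝ) : ℂ) = 1 := by push_cast; rw [← this]
    exact_mod_cast h3
  have hμnn : ∀ i, 0 ≤ hρ.1.eigenvalues i := fun i => hρ.eigenvalues_nonneg i
  have hbound1 : ∑ i, (hρ.1.eigenvalues i)^2 ≤ 1 := by
    calc ∑ i, (hρ.1.eigenvalues i)^2 ≤ ∑ i, hρ.1.eigenvalues i := by
          refine Finset.sum_le_sum fun i _ => ?_
          have hle : hρ.1.eigenvalues i ≤ 1 := by
            rw [← hμsum]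
            exact Finset.single_le_sum (fun j _ => hμnn j) (Finset.mem_univ i)
          nlinarith [hμnn i]
      _ = 1 := hμsum
  have hc2 : ∑ i, (‖c i‖)^2 ≤ 1 / N := by
    rw [le_div_iff₀ hN0]
    calc (∑ i, (‖c i‖)^2) * N = (N:ℝ) * ∑ i, (‖c i‖)^2 := by ring
      _ ≤ 1 := by rw [hS1]; exact hbound1
  -- bound on Pm coordinates
  have htrPm : (Pm.trace).re ≤ N := by
    have h0 : 0 ≤ ((1 - Pm : Matrix (Fin N) (Fin N) ℂ)).trace := aux_trace_nonneg hPm1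
    have := (Complex.le_def.mp h0).1
    simp only [Matrix.trace_sub, Matrix.trace_one, Complex.sub_re, Complex.zero_re,
      Complex.natCast_re, Fintype.card_fin] at this
    linarith
  have htrPm2 : ((Pm * Pm).trace).re ≤ (Pm.trace).re := by
    open scoped MatrixOrder in set S := CFC.sqrt Pm with hSdef
    have hS : S * S = Pm := open scoped MatrixOrder in CFC.sqrt_mul_sqrt_self Pm hPm.nonneg
    have hHerm : Sᴴ = S := open scoped MatrixOrder in (Matrix.nonneg_iff_posSemidef.mp (CFC.sqrt_nonneg Pm)).1
    have hpsd : (Sᴴ * (1 - Pm) * S).PosSemidef := hPm1.conjTranspose_mul_mul_same S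
    have heq : Sᴴ * (1 - Pm) * S = Pm - Pm * Pm := by
      rw [hHerm, ← hS]
      noncomm_ring
    rw [heq] at hpsd
    have h0 := aux_trace_nonneg hpsd
    have := (Complex.le_def.mp h0).1
    simp only [Matrix.trace_sub, Complex.sub_re, Complex.zero_re] at this
    linarith
  have hpm2 : ∑ i, (‖pm i‖)^2 ≤ 1 := by
    have : (N:ℝ) * ∑ i, (‖pm i‖)^2 ≤ N := by
      rw [hS2]; linarith
    have h4 : (N:ℝ) * ∑ i, (‖pm i‖)^2 ≤ (N:ℝ) * 1 := by linarith
    exact le_of_mul_le_mul_left h4 hN0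
  -- sup bound
  haveI : Nonempty (Fin N) := Fin.pos_iff_nonempty.mp hN
  haveI : Nontrivial (Matrix (Fin N) (Fin N) ℂ) :=
    ⟨0, 1, fun h => by simpa [Matrix.one_apply] using congrFun (congrFun h ⟨0, hN⟩) ⟨0, hN⟩⟩
  haveI : Nonempty ι := P.index_nonempty
  set M := ⨆ i, ‖eps i‖ with hM
  have hMle : ∀ i, ‖eps i‖ ≤ M :=
    fun i => le_ciSup (f := fun i => ‖eps i‖) (Set.Finite.bddAbove (Set.finite_range _)) i
  have hM0 : 0 ≤ M := le_trans (norm_nonneg _) (hMle (Classical.arbitrary ι))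
  -- Cauchy-Schwarz
  set Ssum := ∑ i, ‖c i‖ * ‖pm i‖ with hSsum
  have hCS : Ssum^2 ≤ (∑ i, (‖c i‖)^2) * ∑ i, (‖pm i‖)^2 :=
    Finset.sum_mul_sq_le_sq_mul_sq _ _ _
  have hSsum_nn : 0 ≤ Ssum :=
    Finset.sum_nonneg fun i _ => mul_nonneg (norm_nonneg _) (norm_nonneg _)
  have hSsum_le : Ssum ≤ Real.sqrt (1 / N) := by
    rw [show Real.sqrt (1/N) = Real.sqrt ((1/N) * 1) by rw [mul_one]]
    refine (Real.le_sqrt hSsum_nn (by positivity)).mpr ?_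
    calc Ssum^2 ≤ _ := hCS
      _ ≤ (1/N) * 1 := by
          apply mul_le_mul hc2 hpm2 (Finset.sum_nonneg fun i _ => sq_nonneg _) (by positivity)
  -- final estimate
  rw [hT]
  calc ‖∑ i, (eps i * c i) * ((N:ℂ) * (starRingEnd ℂ) (pm i))‖
      ≤ ∑ i, ‖(eps i * c i) * ((N:ℂ) * (starRingEnd ℂ) (pm i))‖ :=
        norm_sum_le _ _
    _ = ∑ i, ‖eps i‖ * ‖c i‖ * ((N:ℝ) * ‖pm i‖) := by
        refine Finset.sum_congr rfl fun i _ => ?_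
        simp [map_mul, Complex.norm_conj]
    _ ≤ ∑ i, M * ((N:ℝ) * (‖c i‖ * ‖pm i‖)) := by
        refine Finset.sum_le_sum fun i _ => ?_
        have hle := hMle i
        calc ‖eps i‖ * ‖c i‖ * ((N:ℝ) * ‖pm i‖)
            = ‖eps i‖ * (‖c i‖ * ((N:ℝ) * ‖pm i‖)) := by ring
          _ ≤ M * (‖c i‖ * ((N:ℝ) * ‖pm i‖)) :=
              mul_le_mul_of_nonneg_right hle (by positivity)
          _ = M * ((N:ℝ) * (‖c i‖ * ‖pm i‖)) := by ring
    _ = (N:ℝ) * M * Ssum := by rw [hSsum, Finset.mul_sum]; ring_nf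
    _ ≤ (N:ℝ) * M * Real.sqrt (1/N) := by
        apply mul_le_mul_of_nonneg_left hSsum_le (by positivity)
    _ = Real.sqrt N * M := by
        rw [one_div, Real.sqrt_inv]
        have hs : (0:ℝ) < Real.sqrt N := Real.sqrt_pos.mpr hN0
        have hms := Real.mul_self_sqrt hN0.le
        field_simp
        nlinarith [hms]
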